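/- Let H and X be complex Hilbert spaces, Q ∈ B(H) an idempotent, and π : B(H) → B(X) a unital *-algebra homomorphism. Then π(Q) is an idempotent and s(π(Q)) = π(s(Q)). -/

import Mathlib

/- For an idempotent `Q` on a complex Hilbert space `H`, we define (in `B(H)`):
the orthogonal projection onto the closure of the range of an operator,
the range projection `P_{ran Q} = Q (Q + Q* - 1)⁻¹`,
`|Q*| = (Q Q*)^{1/2}`, its Moore-Penrose inverse
`|Q*|^† = (P_{ran Q} P_{ran Q*} P_{ran Q})^{1/2}`,
the matched projection `m(Q) = (1/2)(|Q*| + Q*) |Q*|^† (|Q*| + 1)⁻¹ (|Q*| + Q)`,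
and the supplementary projection `s(Q) = m(2 P_{ran Q} - Q)`. -/

noncomputable section

namespace QPP

variable {H : Type*} [NormedAddCommGroup H] [InnerProductSpace ℂ H] [CompleteSpace H]

/-- The orthogonal projection onto the closure of the range of `T`, as an element of `B(H)`. -/
def closRangeProj (T : H →L[ℂ] H) : H →L[ℂ] H :=
  letI K := (LinearMap.range (T : H →ₗ[ℂ] H)).topologicalClosure
  haveI : CompleteSpace K := (LinearMap.range (T : H →ₗ[ℂ] H)).isClosed_topologicalClosure.isComplete.completeSpace_coe
  K.subtypeL ∘L K.orthogonalProjectionOnto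

/-- The range projection `P_{ran Q} = Q (Q + Q* - 1)⁻¹` of an idempotent `Q`.  (For an
idempotent `Q` the operator `Q + Q* - 1` is invertible, so `Ring.inverse` is its inverse.) -/
def rangeProj (Q : H →L[ℂ] H) : H →L[ℂ] H :=
  Q * Ring.inverse (Q + star Q - 1)

/-- `|Q*| = (Q Q*)^{1/2}`. -/
def absStar (Q : H →L[ℂ] H) : H →L[ℂ] H :=
  CFC.sqrt (Q * star Q)

/-- `|Q*|^† = (P_{ran Q} P_{ran Q*} P_{ran Q})^{1/2}`, the Moore-Penrose inverse of `|Q*|`. -/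
def absStarPinv (Q : H →L[ℂ] H) : H →L[ℂ] H :=
  CFC.sqrt (rangeProj Q * rangeProj (star Q) * rangeProj Q)

/-- The matched projection `m(Q) = (1/2)(|Q*| + Q*) |Q*|^† (|Q*| + 1)⁻¹ (|Q*| + Q)`. -/
def matchedProj (Q : H →L[ℂ] H) : H →L[ℂ] H :=
  (2 : ℂ)⁻¹ • ((absStar Q + star Q) * absStarPinv Q * Ring.inverse (absStar Q + 1)
      * (absStar Q + Q))

/-- The supplementary projection `s(Q) = m(2 P_{ran Q} - Q)`. -/
def suppProj (Q : H →L[ℂ] H) : H →L[ℂ] H :=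
  matchedProj (2 * rangeProj Q - Q)


set_option synthInstance.maxHeartbeats 1000000
set_option maxHeartbeats 1000000

section lemmas

variable {Q : H →L[ℂ] H}

lemma isUnit_of_mul_self {M : Type*} [Monoid M] {a : M} (h : IsUnit (a * a)) : IsUnit a := by
  rw [← sq] at h
  exact (isUnit_pow_iff two_ne_zero).mp h

lemma star_idem (hq : IsIdempotentElem Q) : IsIdempotentElem (star Q) := by
  unfold IsIdempotentElem
  rw [← star_mul, hq.eq]

lemma unitA (hq : IsIdempotentElem Q) : IsUnit (Q + star Q - 1) := by
  have hq' : star Q * star Q = star Q := star_idem hq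
  have key : (Q + star Q - 1) * (Q + star Q - 1) = 1 + (Q - star Q) * star (Q - star Q) := by
    simp only [star_sub, star_star]
    noncomm_ring [hq.eq, hq']
  have h1 : IsUnit (1 + (Q - star Q) * star (Q - star Q)) :=
    CStarAlgebra.isUnit_of_le 1
      (le_add_of_nonneg_right (mul_star_self_nonneg _)) isStrictlyPositive_one
  exact isUnit_of_mul_self (key ▸ h1)

lemma starA : star (Q + star Q - 1) = Q + star Q - 1 := by
  simp only [star_sub, star_add, star_star, star_one]
  abel

lemma star_invA : star (Ring.inverse (Q + star Q - 1)) = Ring.inverse (Q + star Q - 1) := by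
  rw [← Ring.inverse_star, starA]

lemma hAq (hq : IsIdempotentElem Q) : (Q + star Q - 1) * Q = star Q * Q := by
  noncomm_ring [hq.eq]

lemma hswap (hq : IsIdempotentElem Q) :
    (Q + star Q - 1) * Q = star Q * (Q + star Q - 1) := by
  have hq' : star Q * star Q = star Q := star_idem hq
  noncomm_ring [hq.eq, hq']

lemma hcomm (hq : IsIdempotentElem Q) :
    Q * Ring.inverse (Q + star Q - 1) = Ring.inverse (Q + star Q - 1) * star Q := by
  set A := Q + star Q - 1 with hA
  set iA := Ring.inverse A with hiA
  have h1 : A * iA = 1 := Ring.mul_inverse_cancel _ (unitA hq)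
  have h2 : iA * A = 1 := Ring.inverse_mul_cancel _ (unitA hq)
  calc Q * iA = iA * (A * Q) * iA := by rw [← mul_assoc iA A Q, h2, one_mul]
    _ = iA * (star Q * A) * iA := by rw [hswap hq]
    _ = iA * star Q * (A * iA) := by rw [mul_assoc, mul_assoc, mul_assoc]
    _ = iA * star Q := by rw [h1, mul_one]

lemma rangeProj_mul (hq : IsIdempotentElem Q) : rangeProj Q * Q = Q := by
  unfold rangeProj
  set A := Q + star Q - 1 with hA
  set iA := Ring.inverse A with hiA
  have h2 : iA * A = 1 := Ring.inverse_mul_cancel _ (unitA hq)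
  calc Q * iA * Q = iA * star Q * Q := by rw [hcomm hq]
    _ = iA * (A * Q) := by rw [mul_assoc, hAq hq]
    _ = Q := by rw [← mul_assoc, h2, one_mul]

lemma mul_rangeProj (hq : IsIdempotentElem Q) : Q * rangeProj Q = rangeProj Q := by
  unfold rangeProj
  rw [← mul_assoc, hq.eq]

lemma rangeProj_idem (hq : IsIdempotentElem Q) : rangeProj Q * rangeProj Q = rangeProj Q := by
  nth_rewrite 2 [rangeProj]
  rw [← mul_assoc, rangeProj_mul hq, rangeProj]

lemma rangeProj_star (hq : IsIdempotentElem Q) : star (rangeProj Q) = rangeProj Q := by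
  unfold rangeProj
  rw [star_mul, star_invA]
  exact (hcomm hq).symm

lemma pinv_arg_nonneg (hq : IsIdempotentElem Q) :
    0 ≤ rangeProj Q * rangeProj (star Q) * rangeProj Q := by
  set P := rangeProj Q
  set P' := rangeProj (star Q)
  have hP'2 : P' * P' = P' := rangeProj_idem (star_idem hq)
  have key : P * P' * P = star (P' * P) * (P' * P) := by
    rw [star_mul, rangeProj_star (star_idem hq), rangeProj_star hq, ← mul_assoc,
      mul_assoc P P' P', hP'2]
  rw [key]
  exact star_mul_self_nonneg _

lemma unit_absStar_add_one (Q : H →L[ℂ] H) : IsUnit (absStar Q + 1) :=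
  CStarAlgebra.isUnit_of_le 1
    (le_add_of_nonneg_left (CFC.sqrt_nonneg _)) isStrictlyPositive_one

lemma idem_aux (hq : IsIdempotentElem Q) : IsIdempotentElem (2 * rangeProj Q - Q) := by
  unfold IsIdempotentElem
  have h1 := rangeProj_idem hq
  have h2 := rangeProj_mul hq
  have h3 := mul_rangeProj hq
  noncomm_ring [h1, h2, h3, hq.eq]

end lemmas

section maps

variable {H : Type*} [NormedAddCommGroup H] [InnerProductSpace ℂ H] [CompleteSpace H]
variable {X : Type*} [NormedAddCommGroup X] [InnerProductSpace ℂ X] [CompleteSpace X]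
variable (π : (H →L[ℂ] H) →⋆ₐ[ℂ] (X →L[ℂ] X)) {Q : H →L[ℂ] H}

lemma map_nonneg' {a : H →L[ℂ] H} (ha : 0 ≤ a) : 0 ≤ π a := by
  have h1 : a = star (CFC.sqrt a) * CFC.sqrt a := by
    rw [(IsSelfAdjoint.of_nonneg (CFC.sqrt_nonneg _)).star_eq, CFC.sqrt_mul_sqrt_self a ha]
  rw [h1, map_mul, map_star]
  exact star_mul_self_nonneg _

lemma map_sqrt {a : H →L[ℂ] H} (ha : 0 ≤ a) : π (CFC.sqrt a) = CFC.sqrt (π a) := by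
  refine (CFC.sqrt_unique ?_ (map_nonneg' π (CFC.sqrt_nonneg _))).symm
  rw [← map_mul, CFC.sqrt_mul_sqrt_self a ha]

lemma map_ringInverse {a : H →L[ℂ] H} (ha : IsUnit a) :
    π (Ring.inverse a) = Ring.inverse (π a) := by
  have h2 : π (Ring.inverse a) * π a = 1 := by
    rw [← map_mul, Ring.inverse_mul_cancel _ ha, map_one]
  obtain ⟨u, hu⟩ := ha.map π
  rw [← hu, Ring.inverse_unit]
  rw [← hu] at h2
  exact (Units.inv_eq_of_mul_eq_one_left h2).symm

lemma map_rangeProj (hq : IsIdempotentElem Q) : π (rangeProj Q) = rangeProj (π Q) := by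
  unfold rangeProj
  rw [map_mul, map_ringInverse π (unitA hq)]
  simp only [map_sub, map_add, map_star, map_one]

lemma map_absStar (Q : H →L[ℂ] H) : π (absStar Q) = absStar (π Q) := by
  unfold absStar
  rw [map_sqrt π (mul_star_self_nonneg Q), map_mul, map_star]

lemma map_absStarPinv (hq : IsIdempotentElem Q) : π (absStarPinv Q) = absStarPinv (π Q) := by
  unfold absStarPinv
  rw [map_sqrt π (pinv_arg_nonneg hq), map_mul, map_mul, map_rangeProj π hq,
    map_rangeProj π (star_idem hq), map_star]

lemma map_matchedProj (hq : IsIdempotentElem Q) : π (matchedProj Q) = matchedProj (π Q) := by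
  unfold matchedProj
  rw [map_smul]
  congr 1
  rw [map_mul, map_mul, map_mul, map_add, map_add, map_ringInverse π (unit_absStar_add_one Q),
    map_add, map_one, map_star, map_absStar, map_absStarPinv π hq]

lemma map_suppProj (hq : IsIdempotentElem Q) : π (suppProj Q) = suppProj (π Q) := by
  unfold suppProj
  rw [map_matchedProj π (idem_aux hq), map_sub, map_mul, map_ofNat, map_rangeProj π hq]

end maps

end QPP

variable {H : Type*} [NormedAddCommGroup H] [InnerProductSpace ℂ H] [CompleteSpace H]

/-- If `π : B(H) → B(X)` is a unital *-algebra homomorphism and `Q` is an idempotent, then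
`π(Q)` is an idempotent and `s(π(Q)) = π(s(Q))`. -/
theorem suppProj_map_starAlgHom {X : Type*} [NormedAddCommGroup X] [InnerProductSpace ℂ X]
    [CompleteSpace X] (Q : H →L[ℂ] H) (hQ : IsIdempotentElem Q)
    (π : (H →L[ℂ] H) →⋆ₐ[ℂ] (X →L[ℂ] X)) :
    IsIdempotentElem (π Q) ∧ QPP.suppProj (π Q) = π (QPP.suppProj Q) := by
  refine ⟨?_, (QPP.map_suppProj π hQ).symm⟩
  unfold IsIdempotentElem
  rw [← map_mul, hQ.eq]

end
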